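/- Let θ be a type with a well-founded relation ◁, and order X := ℕ → θ by: y > x iff there exists n such that y and x agree on all i < n and y(n) ◁ x(n) (lexicographic: y is lexicographically below x). Then every nonempty chain γ ⊆ X with respect to < has an upper bound u_γ such that for every d ∈ ℕ there exists x ∈ γ agreeing with u_γ on all i < d. -/

import Mathlib

/-- `LexGt lt x y` : `y > x` in the lexicographic order, i.e. `y` agrees with `x`
below some `n` and `y n ◁ x n`. -/
def LexGt {θ : Type*} (lt : θ → θ → Prop) (x y : ℕ → θ) : Prop :=
  ∃ n : ℕ, (∀ i < n, y i = x i) ∧ lt (y n) (x n)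

/-- Decreasing family of nonempty subsets of the chain: at stage `n+1`, keep only
the sequences whose `n`-th value is `lt`-minimal among stage-`n` sequences. -/
def chainFam {θ : Type*} (lt : θ → θ → Prop) (hwf : WellFounded lt)
    (γ : Set (ℕ → θ)) (hne : γ.Nonempty) : ℕ → {S : Set (ℕ → θ) // S.Nonempty}
  | 0 => ⟨γ, hne⟩
  | n+1 =>
    let p := chainFam lt hwf γ hne n
    ⟨{x ∈ p.1 | x n = hwf.min ((fun z => z n) '' p.1) (p.2.image _)}, by
      obtain ⟨z, hz, hzeq⟩ := hwf.min_mem ((fun z => z n) '' p.1) (p.2.image _)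
      exact ⟨z, hz, hzeq⟩⟩

/-- Chain boundedness of the lexicographic ordering on sequences (Lemma 6.2 of the
paper): every nonempty chain has an upper bound agreeing with a chain member on
every initial segment. -/
theorem lex_chainBounded {θ : Type*} (lt : θ → θ → Prop) (hwf : WellFounded lt)
    (γ : Set (ℕ → θ)) (hne : γ.Nonempty)
    (hchain : ∀ x ∈ γ, ∀ y ∈ γ, x ≠ y → LexGt lt x y ∨ LexGt lt y x) :
    ∃ u : ℕ → θ, (∀ x ∈ γ, x = u ∨ LexGt lt x u) ∧
      ∀ d : ℕ, ∃ x ∈ γ, ∀ i < d, x i = u i := by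
  classical
  set f := chainFam lt hwf γ hne with hf
  set u : ℕ → θ := fun n => hwf.min ((fun z => z n) '' (f n).1) ((f n).2.image _)
    with hu
  have hmem_succ : ∀ n x, x ∈ (f (n+1)).1 ↔ x ∈ (f n).1 ∧ x n = u n := by
    intro n x
    rw [hf]
    simp [chainFam]
    exact fun _ => Iff.rfl
  -- f n ⊆ γ
  have hsub : ∀ n, (f n).1 ⊆ γ := by
    intro n
    induction n with
    | zero => intro x hx; exact hx
    | succ n ih => intro x hx; exact ih ((hmem_succ n x).1 hx).1
  -- members of f n agree with u below n
  have hagree : ∀ n, ∀ x ∈ (f n).1, ∀ i < n, x i = u i := by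
    intro n
    induction n with
    | zero => intro x _ i hi; omega
    | succ n ih =>
      intro x hx i hi
      obtain ⟨hx1, hx2⟩ := (hmem_succ n x).1 hx
      rcases Nat.lt_succ_iff_lt_or_eq.1 hi with h | h
      · exact ih x hx1 i h
      · subst h; exact hx2
  -- conversely, a chain member agreeing with u below n is in f n
  have hin : ∀ n, ∀ x ∈ γ, (∀ i < n, x i = u i) → x ∈ (f n).1 := by
    intro n
    induction n with
    | zero => intro x hx _; exact hx
    | succ n ih =>
      intro x hx hagr
      exact (hmem_succ n x).2 ⟨ih x hx (fun i hi => hagr i (hi.trans n.lt_succ_self)),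
        hagr n n.lt_succ_self⟩
  -- u n is minimal over values at n of f n
  have hmin : ∀ n, ∀ x ∈ (f n).1, ¬ lt (x n) (u n) := by
    intro n x hx
    exact hwf.not_lt_min ((fun z => z n) '' (f n).1) (x := x n) ⟨x, hx, rfl⟩
  have hirr : ∀ a : θ, ¬ lt a a := fun a => hwf.isIrrefl.irrefl a
  refine ⟨u, ?_, ?_⟩
  · intro x hx
    by_cases hxu : x = u
    · exact Or.inl hxu
    right
    have hex : ∃ n, x n ≠ u n := by
      by_contra h
      push_neg at h
      exact hxu (funext h)
    let n := Nat.find hex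
    have hn : x n ≠ u n := Nat.find_spec hex
    have hlt : ∀ i < n, x i = u i := fun i hi => by
      have := Nat.find_min hex hi; simpa using this
    -- x ∈ f n
    have hxf : x ∈ (f n).1 := hin n x hx hlt
    -- pick y ∈ f (n+1)
    obtain ⟨y, hy⟩ := (f (n+1)).2
    have hyγ : y ∈ γ := hsub (n+1) hy
    have hyu : ∀ i < n + 1, y i = u i := hagree (n+1) y hy
    have hxy : x ≠ y := by
      intro h
      exact hn (h ▸ hyu n n.lt_succ_self)
    rcases hchain x hx y hyγ hxy with ⟨m, hm1, hm2⟩ | ⟨m, hm1, hm2⟩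
    · -- lt (y m) (x m), ∀ i < m, y i = x i
      have hmn : m = n := by
        rcases lt_trichotomy m n with h | h | h
        · exfalso
          have : y m = x m := by
            rw [hyu m (h.trans n.lt_succ_self), hlt m h]
          exact hirr _ (this ▸ hm2)
        · exact h
        · exact absurd ((hm1 n h).symm.trans (hyu n n.lt_succ_self)) hn
      subst hmn
      refine ⟨n, fun i hi => (hlt i hi).symm, ?_⟩
      rwa [hyu n n.lt_succ_self] at hm2
    · -- lt (x m) (y m), ∀ i < m, x i = y i
      exfalso
      have hmn : m = n := by
        rcases lt_trichotomy m n with h | h | h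
        · have : x m = y m := by
            rw [hyu m (h.trans n.lt_succ_self), hlt m h]
          exact absurd (this ▸ hm2) (hirr _)
        · exact h
        · exact absurd ((hm1 n h).trans (hyu n n.lt_succ_self)) hn
      subst hmn
      rw [hyu n n.lt_succ_self] at hm2
      exact hmin n x hxf hm2
  · intro d
    obtain ⟨x, hx⟩ := (f d).2
    exact ⟨x, hsub d hx, hagree d x hx⟩
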